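/- arXiv:2511.07735 — 3 statements merged into one kernel-verified Lean document; each statement's English description precedes it below -/
import Mathlib

section
/- Fix 0 < ε_g < 1/2 and 0 < a₁ < a₂. There exist c > 0 and N₀ such that for all integers n, all reals N ≥ N₀, and all x with a₁·N ≤ x ≤ a₂·N and x ≤ n^{1/2} − N^{ε_g}, the 2×2 matrix V_n(x) with entries V₁₁ = (1/N)·∑_{i=1}^n b_i(x)², V₁₂ = V₂₁ = (1/N)·∑_{i=1}^n b_i(x)·c_i(x), V₂₂ = (1/N)·∑_{i=1}^n c_i(x)² satisfies: every entry of V_n(x) − I₂ has absolute value at most exp(−N^{c}). -/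
open Real

/-- `b_i(x) = √N e^{−x²/2} x^i / √(i!)`. -/
noncomputable def bW (N : ℝ) (i : ℕ) (x : ℝ) : ℝ :=
  Real.sqrt N * Real.exp (-x ^ 2 / 2) * x ^ i / Real.sqrt (Nat.factorial i)

/-- `c_i(x) = b_i'(x) = √N e^{−x²/2} ((i − x²)/x) x^i / √(i!)`. -/
noncomputable def cW (N : ℝ) (i : ℕ) (x : ℝ) : ℝ :=
  Real.sqrt N * Real.exp (-x ^ 2 / 2) * (((i : ℝ) - x ^ 2) / x) * x ^ i /
    Real.sqrt (Nat.factorial i)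

set_option maxHeartbeats 1000000

namespace WeylAux

noncomputable def P (l : ℝ) (k : ℕ) : ℝ := ∑ i ∈ Finset.range k, l ^ i / (Nat.factorial i)

lemma P_tendsto (l : ℝ) :
    Filter.Tendsto (fun k => P l k) Filter.atTop (nhds (Real.exp l)) := by
  have h := (NormedSpace.expSeries_div_hasSum_exp l).tendsto_sum_nat
  rw [← Real.exp_eq_exp_ℝ] at h
  exact h

lemma P_le_exp {l : ℝ} (hl : 0 ≤ l) (k : ℕ) : P l k ≤ Real.exp l :=
  Real.sum_le_exp_of_nonneg hl k

lemma P_mono {l : ℝ} (hl : 0 ≤ l) : Monotone (P l) := by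
  intro a b hab
  exact Finset.sum_le_sum_of_subset_of_nonneg (Finset.range_subset_range.2 hab)
    (fun i _ _ => by positivity)

lemma P_succ (l : ℝ) (k : ℕ) : P l (k + 1) = P l k + l ^ k / (Nat.factorial k) :=
  Finset.sum_range_succ _ _

lemma tail_chernoff {l t : ℝ} (hl : 0 ≤ l) (ht : 0 ≤ t) (m : ℕ) :
    Real.exp l - P l m ≤ Real.exp (l * Real.exp t - t * m) := by
  have hs1 : (1 : ℝ) ≤ Real.exp t := Real.one_le_exp ht
  have key : ∀ K, P l K - P l m ≤ Real.exp (l * Real.exp t - t * m) := by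
    intro K
    rcases le_or_gt K m with hK | hK
    · have h1 : P l K - P l m ≤ 0 := sub_nonpos.2 (P_mono hl hK)
      exact h1.trans (Real.exp_pos _).le
    · have hmK : m ≤ K := hK.le
      have h1 : P l K - P l m = ∑ i ∈ Finset.Ico m K, l ^ i / (Nat.factorial i) := by
        rw [P, P, eq_comm, Finset.sum_Ico_eq_sub _ hmK]
      rw [h1]
      have h2 : ∀ i ∈ Finset.Ico m K,
          l ^ i / (Nat.factorial i) ≤
            Real.exp (-(t * m)) * ((l * Real.exp t) ^ i / (Nat.factorial i)) := by
        intro i hi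
        obtain ⟨him, -⟩ := Finset.mem_Ico.1 hi
        rw [mul_pow, ← Real.exp_nat_mul]
        have hexp : Real.exp (t * m) ≤ Real.exp ((i : ℕ) * t) := by
          apply Real.exp_le_exp.2
          calc t * m ≤ t * i := by
                exact mul_le_mul_of_nonneg_left (by exact_mod_cast him) ht
            _ = (i : ℝ) * t := mul_comm _ _
        have hfac : (0:ℝ) < Nat.factorial i := by positivity
        rw [div_le_iff₀ hfac]
        have heq : Real.exp (-(t * m)) * (l ^ i * Real.exp ((i:ℕ) * t) / (Nat.factorial i)) *
            (Nat.factorial i) = l ^ i * Real.exp ((i:ℝ) * t - t * m) := by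
          rw [Real.exp_sub, Real.exp_neg]
          field_simp
        rw [heq]
        nth_rewrite 1 [show l ^ i = l ^ i * 1 by ring]
        apply mul_le_mul_of_nonneg_left _ (by positivity)
        rw [Real.exp_sub]
        rw [le_div_iff₀ (Real.exp_pos _)]
        rw [one_mul]
        exact hexp
      calc ∑ i ∈ Finset.Ico m K, l ^ i / (Nat.factorial i)
          ≤ ∑ i ∈ Finset.Ico m K,
              Real.exp (-(t * m)) * ((l * Real.exp t) ^ i / (Nat.factorial i)) :=
            Finset.sum_le_sum h2
        _ = Real.exp (-(t * m)) *
              ∑ i ∈ Finset.Ico m K, (l * Real.exp t) ^ i / (Nat.factorial i) := by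
            rw [Finset.mul_sum]
        _ ≤ Real.exp (-(t * m)) *
              ∑ i ∈ Finset.range K, (l * Real.exp t) ^ i / (Nat.factorial i) := by
            apply mul_le_mul_of_nonneg_left _ (Real.exp_pos _).le
            apply Finset.sum_le_sum_of_subset_of_nonneg
            · intro i hi; exact Finset.mem_range.2 (Finset.mem_Ico.1 hi).2
            · intro i _ _; positivity
        _ ≤ Real.exp (-(t * m)) * Real.exp (l * Real.exp t) := by
            apply mul_le_mul_of_nonneg_left _ (Real.exp_pos _).le
            exact Real.sum_le_exp_of_nonneg (by positivity) K
        _ = Real.exp (l * Real.exp t - t * m) := by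
            rw [← Real.exp_add]; ring_nf
  have htend : Filter.Tendsto (fun K => P l K - P l m) Filter.atTop
      (nhds (Real.exp l - P l m)) := (P_tendsto l).sub_const _
  exact le_of_tendsto htend (Filter.Eventually.of_forall key)

lemma Ia (l : ℝ) (n : ℕ) :
    ∑ i ∈ Finset.Icc 1 n, l ^ i / (Nat.factorial i) = P l (n + 1) - 1 := by
  induction n with
  | zero => simp [P]
  | succ n ih =>
      rw [Finset.sum_Icc_succ_top (by omega : 1 ≤ n + 1), ih, P_succ l (n+1)]
      ring

lemma Ib (l : ℝ) (n : ℕ) :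
    ∑ i ∈ Finset.Icc 1 n, (i : ℝ) * (l ^ i / (Nat.factorial i)) = l * P l n := by
  induction n with
  | zero => simp [P]
  | succ n ih =>
      rw [Finset.sum_Icc_succ_top (by omega : 1 ≤ n + 1), ih, P_succ]
      have hterm : ((n + 1 : ℕ) : ℝ) * (l ^ (n + 1) / (Nat.factorial (n + 1)))
          = l * (l ^ n / (Nat.factorial n)) := by
        rw [Nat.factorial_succ]
        push_cast
        have h0 : ((Nat.factorial n : ℝ)) ≠ 0 := by positivity
        field_simp
        ring
      rw [hterm]
      ring

lemma Ic (l : ℝ) (n : ℕ) :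
    ∑ i ∈ Finset.Icc 1 n, (i : ℝ) * ((i : ℝ) - 1) * (l ^ i / (Nat.factorial i))
      = l ^ 2 * P l (n - 1) := by
  induction n with
  | zero => simp [P]
  | succ n ih =>
      rw [Finset.sum_Icc_succ_top (by omega : 1 ≤ n + 1), ih]
      match n with
      | 0 => norm_num
      | Nat.succ k =>
          have hterm : ((k + 2 : ℕ) : ℝ) * (((k + 2 : ℕ) : ℝ) - 1) *
              (l ^ (k + 2) / (Nat.factorial (k + 2)))
              = l ^ 2 * (l ^ k / (Nat.factorial k)) := by
            rw [Nat.factorial_succ, Nat.factorial_succ]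
            push_cast
            have h0 : ((Nat.factorial k : ℝ)) ≠ 0 := by positivity
            field_simp
            ring
          show l ^ 2 * P l (k + 1 - 1) + ((k + 2 : ℕ) : ℝ) * (((k + 2 : ℕ) : ℝ) - 1) *
              (l ^ (k + 2) / (Nat.factorial (k + 2))) = l ^ 2 * P l (k + 2 - 1)
          rw [hterm]
          simp only [Nat.add_sub_cancel]
          rw [show k + 2 - 1 = k + 1 by omega, P_succ]
          ring

lemma exp_le_quadratic {t : ℝ} (h0 : 0 ≤ t) (h1 : t ≤ 1) :
    Real.exp t ≤ 1 + t + t ^ 2 := by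
  have h := Real.exp_bound' h0 h1 (n := 2) (by norm_num)
  have h2 : (∑ m ∈ Finset.range 2, t ^ m / (Nat.factorial m)) = 1 + t := by
    simp [Finset.sum_range_succ]
  rw [h2] at h
  calc Real.exp t ≤ 1 + t + t ^ 2 * (2 + 1) / (Nat.factorial 2 * 2) := h
    _ ≤ 1 + t + t ^ 2 := by
        have : t ^ 2 * (2 + 1) / ((Nat.factorial 2 : ℝ) * 2) = t ^ 2 * 3 / 4 := by
          norm_num [Nat.factorial]
        rw [this]
        nlinarith [sq_nonneg t]

lemma mul_core (N x r s : ℝ) (hN : 0 ≤ N) (i : ℕ) :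
    (Real.sqrt N * Real.exp (-x ^ 2 / 2) * r * x ^ i / Real.sqrt (Nat.factorial i)) *
      (Real.sqrt N * Real.exp (-x ^ 2 / 2) * s * x ^ i / Real.sqrt (Nat.factorial i))
      = N * Real.exp (-(x ^ 2)) * (r * s) * ((x ^ 2) ^ i / (Nat.factorial i)) := by
  have hfac : (0:ℝ) ≤ (Nat.factorial i : ℝ) := by positivity
  rw [div_mul_div_comm, Real.mul_self_sqrt hfac]
  have h1 : (Real.sqrt N * Real.exp (-x ^ 2 / 2) * r * x ^ i) *
      (Real.sqrt N * Real.exp (-x ^ 2 / 2) * s * x ^ i)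
      = (Real.sqrt N * Real.sqrt N) * (Real.exp (-x ^ 2 / 2) * Real.exp (-x ^ 2 / 2)) *
        (r * s) * (x ^ i * x ^ i) := by ring
  rw [h1, Real.mul_self_sqrt hN, ← Real.exp_add,
    show -x ^ 2 / 2 + -x ^ 2 / 2 = -(x ^ 2) by ring, ← mul_pow, ← sq x]
  ring

lemma bb {N : ℝ} (hN : 0 ≤ N) (x : ℝ) (i : ℕ) :
    bW N i x * bW N i x = N * Real.exp (-(x ^ 2)) * ((x ^ 2) ^ i / (Nat.factorial i)) := by
  have h := mul_core N x 1 1 hN i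
  simp only [mul_one, one_mul] at h
  unfold bW
  rw [← h]

lemma bc {N : ℝ} (hN : 0 ≤ N) (x : ℝ) (i : ℕ) :
    bW N i x * cW N i x = N * Real.exp (-(x ^ 2)) *
      ((((i : ℝ) - x ^ 2) / x) * ((x ^ 2) ^ i / (Nat.factorial i))) := by
  have h := mul_core N x 1 (((i : ℝ) - x ^ 2) / x) hN i
  simp only [mul_one, one_mul] at h
  unfold bW cW
  rw [h]
  ring

lemma cc {N : ℝ} (hN : 0 ≤ N) (x : ℝ) (i : ℕ) :
    cW N i x * cW N i x = N * Real.exp (-(x ^ 2)) *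
      ((((i : ℝ) - x ^ 2) ^ 2 / x ^ 2) * ((x ^ 2) ^ i / (Nat.factorial i))) := by
  have h := mul_core N x (((i : ℝ) - x ^ 2) / x) (((i : ℝ) - x ^ 2) / x) hN i
  unfold cW
  rw [h, div_mul_div_comm, ← sq, ← sq]
  ring

lemma sum_bb {N : ℝ} (hN : 0 < N) (x : ℝ) (n : ℕ) :
    (1 / N) * ∑ i ∈ Finset.Icc 1 n, bW N i x * bW N i x
      = Real.exp (-(x ^ 2)) * (P (x ^ 2) (n + 1) - 1) := by
  rw [Finset.sum_congr rfl (fun i _ => bb hN.le x i), ← Finset.mul_sum, Ia]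
  field_simp

lemma sum_bc {N x : ℝ} (hN : 0 < N) (hx : x ≠ 0) (n : ℕ) :
    (1 / N) * ∑ i ∈ Finset.Icc 1 n, bW N i x * cW N i x
      = Real.exp (-(x ^ 2)) * x * (1 - (x ^ 2) ^ n / (Nat.factorial n)) := by
  rw [Finset.sum_congr rfl (fun i _ => bc hN.le x i), ← Finset.mul_sum]
  have hpt : ∀ i : ℕ, ((i : ℝ) - x ^ 2) / x * ((x ^ 2) ^ i / (Nat.factorial i))
      = (1 / x) * ((i : ℝ) * ((x ^ 2) ^ i / (Nat.factorial i)))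
        - (x ^ 2 / x) * ((x ^ 2) ^ i / (Nat.factorial i)) := by
    intro i; ring
  rw [Finset.sum_congr rfl (fun i _ => hpt i), Finset.sum_sub_distrib,
    ← Finset.mul_sum, ← Finset.mul_sum, Ib, Ia, P_succ]
  field_simp
  ring

lemma sum_cc {N x : ℝ} (hN : 0 < N) (hx : x ≠ 0) (n : ℕ) :
    (1 / N) * ∑ i ∈ Finset.Icc 1 n, cW N i x * cW N i x
      = Real.exp (-(x ^ 2)) * (1 / x ^ 2) *
          ((x ^ 2) ^ 2 * P (x ^ 2) (n - 1)
            + (1 - 2 * x ^ 2) * (x ^ 2 * P (x ^ 2) n)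
            + (x ^ 2) ^ 2 * (P (x ^ 2) (n + 1) - 1)) := by
  rw [Finset.sum_congr rfl (fun i _ => cc hN.le x i), ← Finset.mul_sum]
  have hpt : ∀ i : ℕ, ((i : ℝ) - x ^ 2) ^ 2 / x ^ 2 * ((x ^ 2) ^ i / (Nat.factorial i))
      = (1 / x ^ 2) * ((i : ℝ) * ((i : ℝ) - 1) * ((x ^ 2) ^ i / (Nat.factorial i)))
        + ((1 - 2 * x ^ 2) / x ^ 2) * ((i : ℝ) * ((x ^ 2) ^ i / (Nat.factorial i)))
        + ((x ^ 2) ^ 2 / x ^ 2) * ((x ^ 2) ^ i / (Nat.factorial i)) := by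
    intro i; ring
  rw [Finset.sum_congr rfl (fun i _ => hpt i), Finset.sum_add_distrib,
    Finset.sum_add_distrib, ← Finset.mul_sum, ← Finset.mul_sum, ← Finset.mul_sum,
    Ic, Ib, Ia]
  field_simp

lemma evcond {εg a₁ a₂ : ℝ} (hε0 : 0 < εg) (hε : εg < 1 / 2) (ha₁ : 0 < a₁)
    (ha₂ : 0 < a₂) :
    ∀ᶠ N : ℝ in Filter.atTop, (1 ≤ N ∧ 3 ≤ a₁ * N ∧ N ^ εg ≤ a₁ * N ∧
      10 * Real.exp (N ^ εg) ≤ Real.exp (a₁ ^ 2 * N ^ 2 / 2) ∧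
      10 * (a₂ ^ 2 * N ^ 2) * Real.exp (N ^ εg) ≤ Real.exp ((N ^ εg) ^ 2 / 4)) := by
  have hεg1 : εg ≤ 1 := by linarith
  have E1 : ∀ᶠ N : ℝ in Filter.atTop, (1:ℝ) ≤ N := Filter.eventually_ge_atTop 1
  have htend2 : Filter.Tendsto (fun N : ℝ => a₁ * N) Filter.atTop Filter.atTop :=
    Filter.Tendsto.const_mul_atTop ha₁ Filter.tendsto_id
  have E2 : ∀ᶠ N : ℝ in Filter.atTop, (3:ℝ) ≤ a₁ * N := htend2.eventually_ge_atTop 3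
  -- E3
  have htend3 : Filter.Tendsto (fun N : ℝ => N ^ (εg - 1)) Filter.atTop (nhds 0) := by
    have := tendsto_rpow_neg_atTop (y := 1 - εg) (by linarith)
    convert this using 2 with N
    ring_nf
  have E3' : ∀ᶠ N : ℝ in Filter.atTop, N ^ (εg - 1) ≤ a₁ :=
    (htend3.eventually_lt_const ha₁).mono fun _ h => h.le
  have E3 : ∀ᶠ N : ℝ in Filter.atTop, N ^ εg ≤ a₁ * N := by
    filter_upwards [E3', Filter.eventually_gt_atTop 0] with N h3 hN0
    have hsplit : N ^ (εg - 1) * N = N ^ εg := by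
      rw [← Real.rpow_add_one hN0.ne' (εg - 1)]
      norm_num
    rw [← hsplit]
    exact mul_le_mul_of_nonneg_right h3 (le_of_lt hN0)
  -- E4
  have hlog10 : Real.log 10 ≤ 9 := by
    have := Real.log_le_sub_one_of_pos (by norm_num : (0:ℝ) < 10)
    linarith
  have E4 : ∀ᶠ N : ℝ in Filter.atTop,
      10 * Real.exp (N ^ εg) ≤ Real.exp (a₁ ^ 2 * N ^ 2 / 2) := by
    have Ec : ∀ᶠ N : ℝ in Filter.atTop, 24 / a₁ ^ 2 ≤ N := Filter.eventually_ge_atTop _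
    filter_upwards [E1, Ec] with N h1 hc
    have ha2 : (0:ℝ) < a₁ ^ 2 := by positivity
    have h24 : 24 ≤ a₁ ^ 2 * N := by
      rw [div_le_iff₀ ha2] at hc
      linarith [hc]
    have hNε : N ^ εg ≤ N := by
      calc N ^ εg ≤ N ^ (1:ℝ) := Real.rpow_le_rpow_of_exponent_le h1 hεg1
        _ = N := Real.rpow_one N
    have key : Real.log 10 + N ^ εg ≤ a₁ ^ 2 * N ^ 2 / 2 := by nlinarith
    calc 10 * Real.exp (N ^ εg) = Real.exp (Real.log 10 + N ^ εg) := by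
          rw [Real.exp_add, Real.exp_log (by norm_num : (0:ℝ) < 10)]
      _ ≤ Real.exp (a₁ ^ 2 * N ^ 2 / 2) := Real.exp_le_exp.2 key
  -- E5
  have hlo := (isLittleO_log_rpow_atTop hε0).bound one_pos
  have htendε : Filter.Tendsto (fun N : ℝ => N ^ εg) Filter.atTop Filter.atTop :=
    tendsto_rpow_atTop hε0
  have E5 : ∀ᶠ N : ℝ in Filter.atTop,
      10 * (a₂ ^ 2 * N ^ 2) * Real.exp (N ^ εg) ≤ Real.exp ((N ^ εg) ^ 2 / 4) := by
    filter_upwards [E1, hlo, htendε.eventually_ge_atTop (Real.log (10 * a₂ ^ 2)),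
      htendε.eventually_ge_atTop 17] with N h1 hlog hC h17
    have hN0 : (0:ℝ) < N := by linarith
    have hlogN : Real.log N ≤ N ^ εg := by
      have h2 : |Real.log N| ≤ 1 * |N ^ εg| := by simpa using hlog
      have h3 : Real.log N ≤ |Real.log N| := le_abs_self _
      have h4 : |N ^ εg| = N ^ εg := abs_of_nonneg (Real.rpow_nonneg hN0.le _)
      rw [h4, one_mul] at h2
      linarith
    have key : Real.log (10 * a₂ ^ 2) + 2 * Real.log N + N ^ εg ≤ (N ^ εg) ^ 2 / 4 := by
      nlinarith
    calc 10 * (a₂ ^ 2 * N ^ 2) * Real.exp (N ^ εg)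
        = Real.exp (Real.log (10 * a₂ ^ 2) + 2 * Real.log N + N ^ εg) := by
          rw [Real.exp_add, Real.exp_add, Real.exp_log (by positivity),
            two_mul, Real.exp_add, Real.exp_log hN0]
          ring
      _ ≤ Real.exp ((N ^ εg) ^ 2 / 4) := Real.exp_le_exp.2 key
  filter_upwards [E1, E2, E3, E4, E5] with N h1 h2 h3 h4 h5
  exact ⟨h1, h2, h3, h4, h5⟩

lemma aux_exp_div {a c d : ℝ} (h : 2 * a * Real.exp d ≤ Real.exp c) :
    a * Real.exp (-c) ≤ Real.exp (-d) / 2 := by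
  have hc := Real.exp_pos c
  have hd := Real.exp_pos d
  rw [Real.exp_neg, Real.exp_neg]
  have h2 : a * (Real.exp c)⁻¹ = a / Real.exp c := (div_eq_mul_inv _ _).symm
  have h3 : (Real.exp d)⁻¹ / 2 = 1 / (2 * Real.exp d) := by
    rw [inv_eq_one_div, div_div, mul_comm]
  rw [h2, h3, div_le_div_iff₀ hc (by positivity)]
  nlinarith

end WeylAux

/-- The 2×2 covariance matrix `V_n(x)` is exponentially close to the identity. -/
theorem weyl_covariance_two_dim
    (εg a₁ a₂ : ℝ) (hε0 : 0 < εg) (hε : εg < 1 / 2) (ha₁ : 0 < a₁) (ha : a₁ < a₂) :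
    ∃ c > (0 : ℝ), ∃ N₀ : ℝ, ∀ (n : ℕ) (N : ℝ), N₀ ≤ N →
      ∀ x : ℝ, a₁ * N ≤ x → x ≤ a₂ * N → x ≤ Real.sqrt n - N ^ εg →
        ∀ p q : Fin 2,
          |((Matrix.of fun p q : Fin 2 =>
                (1 / N) * ∑ i ∈ Finset.Icc 1 n,
                  (![fun i => bW N i x, fun i => cW N i x] p) i *
                    (![fun i => bW N i x, fun i => cW N i x] q) i)
              - (1 : Matrix (Fin 2) (Fin 2) ℝ)) p q|
            ≤ Real.exp (-(N ^ c)) := by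
  obtain ⟨N₀, hN₀⟩ := Filter.eventually_atTop.mp
    (WeylAux.evcond hε0 hε ha₁ (ha₁.trans ha))
  refine ⟨εg, hε0, N₀, ?_⟩
  intro n N hNN x hx1 hx2 hx3 p q
  obtain ⟨h1N, h3a, hNεa, hH4, hH5⟩ := hN₀ N hNN
  have hN0 : (0:ℝ) < N := by linarith
  have hx3' : (3:ℝ) ≤ x := le_trans h3a hx1
  have hx0 : (0:ℝ) < x := by linarith
  set l : ℝ := x ^ 2 with hldef
  have hl9 : (9:ℝ) ≤ l := by
    rw [hldef]
    calc (9:ℝ) = 3 * 3 := by norm_num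
      _ ≤ x * x := mul_le_mul hx3' hx3' (by norm_num) hx0.le
      _ = x ^ 2 := (sq x).symm
  have hl0 : (0:ℝ) < l := by linarith
  have hNε1 : (1:ℝ) ≤ N ^ εg := Real.one_le_rpow h1N hε0.le
  have hNε0 : (0:ℝ) < N ^ εg := by linarith
  have hxNε : (3:ℝ) ≤ x * N ^ εg := by
    have h := mul_le_mul_of_nonneg_left hNε1 hx0.le
    rw [mul_one] at h
    linarith
  -- `n` is large
  have hsq : x + N ^ εg ≤ Real.sqrt n := by linarith
  have hxN0 : (0:ℝ) ≤ x + N ^ εg := by linarith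
  have hn : (x + N ^ εg) ^ 2 ≤ (n:ℝ) := by
    calc (x + N ^ εg) ^ 2 ≤ Real.sqrt n ^ 2 := pow_le_pow_left₀ hxN0 hsq 2
      _ = (n:ℝ) := Real.sq_sqrt (Nat.cast_nonneg n)
  have hexpand : (x + N ^ εg) ^ 2 = x ^ 2 + 2 * (x * N ^ εg) + (N ^ εg) ^ 2 := by ring
  have hn16 : (16:ℝ) ≤ (n:ℝ) := by
    have h4 : (4:ℝ) ≤ x + N ^ εg := by linarith
    have : (4:ℝ) ^ 2 ≤ (x + N ^ εg) ^ 2 := pow_le_pow_left₀ (by norm_num) h4 2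
    norm_num at this
    linarith
  have hn1 : 1 ≤ n := by
    have : (1:ℝ) ≤ (n:ℝ) := by linarith
    exact_mod_cast this
  have hcast : ((n - 1 : ℕ) : ℝ) = (n:ℝ) - 1 := by
    rw [Nat.cast_sub hn1]; norm_num
  -- Chernoff bound on the tail
  set u : ℝ := N ^ εg / x with hudef
  have hu0 : (0:ℝ) ≤ u := by positivity
  have hu1 : u ≤ 1 := by
    rw [hudef, div_le_one hx0]
    calc N ^ εg ≤ a₁ * N := hNεa
      _ ≤ x := hx1
  have hlu : l * u = x * N ^ εg := by
    rw [hudef, hldef]; field_simp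
  have hlu2 : l * u ^ 2 = (N ^ εg) ^ 2 := by
    rw [hudef, hldef]; field_simp
  set t : ℝ := u / 2 with htdef
  have ht0 : (0:ℝ) ≤ t := by positivity
  have hcher := WeylAux.tail_chernoff hl0.le ht0 (n - 1)
  have hexp_t : Real.exp t ≤ 1 + t + t ^ 2 :=
    WeylAux.exp_le_quadratic ht0 (by rw [htdef]; linarith)
  have hn1R : l * (1 + u) ≤ (n:ℝ) - 1 := by
    have hsqnn : (0:ℝ) ≤ (N ^ εg) ^ 2 := sq_nonneg _
    have hld : l = x ^ 2 := hldef
    linarith [hn, hexpand, hlu, hxNε]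
  have e1 : l * t ^ 2 = (N ^ εg) ^ 2 / 4 := by
    rw [htdef]; linear_combination hlu2 / 4
  have e2 : l * t * u = (N ^ εg) ^ 2 / 2 := by
    rw [htdef]; linear_combination hlu2 / 2
  have hEbound : l * Real.exp t - t * ((n - 1 : ℕ) : ℝ) ≤ l - (N ^ εg) ^ 2 / 4 := by
    rw [hcast]
    have hmul := mul_le_mul_of_nonneg_left hn1R ht0
    have hml := mul_le_mul_of_nonneg_left hexp_t hl0.le
    linarith [hmul, hml, e1, e2]
  have hTail : Real.exp (-l) * (Real.exp l - WeylAux.P l (n - 1))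
      ≤ Real.exp (-((N ^ εg) ^ 2 / 4)) := by
    calc Real.exp (-l) * (Real.exp l - WeylAux.P l (n - 1))
        ≤ Real.exp (-l) * Real.exp (l * Real.exp t - t * ((n - 1 : ℕ) : ℝ)) :=
          mul_le_mul_of_nonneg_left hcher (Real.exp_pos _).le
      _ = Real.exp (l * Real.exp t - t * ((n - 1 : ℕ) : ℝ) - l) := by
          rw [← Real.exp_add]; ring_nf
      _ ≤ Real.exp (-((N ^ εg) ^ 2 / 4)) := Real.exp_le_exp.2 (by linarith)
  have hTnn : ∀ k, 0 ≤ Real.exp l - WeylAux.P l k :=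
    fun k => sub_nonneg.2 (WeylAux.P_le_exp hl0.le k)
  have hPm : ∀ j k : ℕ, j ≤ k → WeylAux.P l j ≤ WeylAux.P l k :=
    fun j k h => WeylAux.P_mono hl0.le h
  have hE0 : (0:ℝ) < Real.exp (-l) := Real.exp_pos _
  -- common final bound
  have hl_le : l ≤ a₂ ^ 2 * N ^ 2 := by
    rw [hldef]
    calc x ^ 2 ≤ (a₂ * N) ^ 2 := pow_le_pow_left₀ hx0.le hx2 2
      _ = a₂ ^ 2 * N ^ 2 := by ring
  have hfinal : 5 * l * (Real.exp (-l) * (Real.exp l - WeylAux.P l (n - 1)))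
      + l * Real.exp (-l) ≤ Real.exp (-(N ^ εg)) := by
    have hp1 : 5 * l * (Real.exp (-l) * (Real.exp l - WeylAux.P l (n - 1)))
        ≤ Real.exp (-(N ^ εg)) / 2 := by
      have hkey : 2 * (5 * l) * Real.exp (N ^ εg) ≤ Real.exp ((N ^ εg) ^ 2 / 4) := by
        have := mul_le_mul_of_nonneg_right hl_le (Real.exp_pos (N ^ εg)).le
        linarith [hH5]
      have h2 := WeylAux.aux_exp_div hkey
      have h3 := mul_le_mul_of_nonneg_left hTail (by positivity : (0:ℝ) ≤ 5 * l)
      linarith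
    have hp2 : l * Real.exp (-l) ≤ Real.exp (-(N ^ εg)) / 2 := by
      have hq : (l / 2) ^ 2 / 2 ≤ Real.exp (l / 2) := by
        have h := Real.sum_le_exp_of_nonneg (by positivity : (0:ℝ) ≤ l / 2) 3
        simp [Finset.sum_range_succ, Nat.factorial] at h
        linarith
      have hll : l ≤ Real.exp (l / 2) := by
        have h9 := mul_le_mul_of_nonneg_right hl9 hl0.le
        linarith [hq, h9]
      have h2 : l * Real.exp (-l) ≤ Real.exp (l / 2) * Real.exp (-l) :=
        mul_le_mul_of_nonneg_right hll (Real.exp_pos _).le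
      have h3 : Real.exp (l / 2) * Real.exp (-l) = Real.exp (-(l / 2)) := by
        rw [← Real.exp_add]; ring_nf
      have hcmp : a₁ ^ 2 * N ^ 2 ≤ l := by
        rw [hldef]
        calc a₁ ^ 2 * N ^ 2 = (a₁ * N) ^ 2 := by ring
          _ ≤ x ^ 2 := pow_le_pow_left₀ (by positivity) hx1 2
      have h4 : Real.exp (-(l / 2)) ≤ Real.exp (-(a₁ ^ 2 * N ^ 2 / 2)) :=
        Real.exp_le_exp.2 (by linarith)
      have h5 : Real.exp (-(a₁ ^ 2 * N ^ 2 / 2)) ≤ Real.exp (-(N ^ εg)) / 2 := by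
        have := WeylAux.aux_exp_div (a := 1)
          (c := a₁ ^ 2 * N ^ 2 / 2) (d := N ^ εg)
          (by linarith [hH4, (Real.exp_pos (N ^ εg)).le])
        simpa using this
      linarith
    linarith
  have h1 : Real.exp (-l) * Real.exp l = 1 := by
    rw [← Real.exp_add]; simp
  -- facts for the entries
  have hT1 := hTnn (n - 1)
  have hT2 := hTnn n
  have hT3 := hTnn (n + 1)
  have hm2 : Real.exp l - WeylAux.P l n ≤ Real.exp l - WeylAux.P l (n - 1) := by
    have := hPm (n - 1) n (by omega); linarith
  have hm3 : Real.exp l - WeylAux.P l (n + 1) ≤ Real.exp l - WeylAux.P l (n - 1) := by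
    have := hPm (n - 1) (n + 1) (by omega); linarith
  have hA1 : (0:ℝ) ≤ Real.exp (-l) * (Real.exp l - WeylAux.P l (n - 1)) :=
    mul_nonneg hE0.le hT1
  -- the four entries
  fin_cases p <;> fin_cases q
  -- (0,0)
  · simp only [Matrix.sub_apply, Matrix.of_apply, Matrix.cons_val_zero, Matrix.cons_val_one,
      Matrix.head_cons, Matrix.one_apply_eq, Fin.isValue, Fin.mk_zero, Fin.mk_one]
    rw [WeylAux.sum_bb hN0 x n]
    have hval : Real.exp (-(x ^ 2)) * (WeylAux.P (x ^ 2) (n + 1) - 1) - 1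
        = -(Real.exp (-l) * (Real.exp l - WeylAux.P l (n + 1))) - Real.exp (-l) := by
      rw [← hldef]; linear_combination h1
    have hA3 : (0:ℝ) ≤ Real.exp (-l) * (Real.exp l - WeylAux.P l (n + 1)) :=
      mul_nonneg hE0.le hT3
    rw [hval, abs_of_nonpos (by linarith)]
    have hc1 := mul_le_mul_of_nonneg_left hm3 hE0.le
    have hc2 : 0 ≤ (5 * l - 1) * (Real.exp (-l) * (Real.exp l - WeylAux.P l (n - 1))) :=
      mul_nonneg (by linarith) hA1
    have hc3 : 0 ≤ (l - 1) * Real.exp (-l) := mul_nonneg (by linarith) hE0.le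
    linarith [hfinal, hc1, hc2, hc3]
  -- (0,1)
  · simp only [Matrix.sub_apply, Matrix.of_apply, Matrix.cons_val_zero, Matrix.cons_val_one,
      Matrix.head_cons, Fin.isValue, Fin.mk_zero, Fin.mk_one]
    rw [Matrix.one_apply_ne (by decide)]
    rw [WeylAux.sum_bc hN0 hx0.ne' n]
    have hterm : (x ^ 2) ^ n / (Nat.factorial n) ≤ Real.exp l - WeylAux.P l (n - 1) := by
      have hs := WeylAux.P_succ l n
      have hle := WeylAux.P_le_exp hl0.le (n + 1)
      have hm := hPm (n - 1) n (by omega)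
      rw [← hldef]
      linarith
    have htnn : (0:ℝ) ≤ (x ^ 2) ^ n / (Nat.factorial n) := by positivity
    have habs : |Real.exp (-(x ^ 2)) * x * (1 - (x ^ 2) ^ n / (Nat.factorial n)) - 0|
        ≤ Real.exp (-l) * x * (1 + (x ^ 2) ^ n / (Nat.factorial n)) := by
      rw [sub_zero, ← hldef, abs_mul, abs_of_nonneg (by positivity : (0:ℝ) ≤ Real.exp (-l) * x)]
      have : |1 - (x ^ 2) ^ n / (Nat.factorial n)| ≤ 1 + (x ^ 2) ^ n / (Nat.factorial n) := by
        rw [abs_le]; constructor <;> [linarith; linarith]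
      exact mul_le_mul_of_nonneg_left this (by positivity)
    refine habs.trans ?_
    have hx_le : x ≤ l := by
      have h := mul_le_mul_of_nonneg_left (show (1:ℝ) ≤ x by linarith) hx0.le
      rw [hldef, sq]
      rw [mul_one] at h
      linarith
    have f1 : Real.exp (-l) * x ≤ Real.exp (-l) * l :=
      mul_le_mul_of_nonneg_left hx_le hE0.le
    have f2 : Real.exp (-l) * x * ((x ^ 2) ^ n / (Nat.factorial n))
        ≤ Real.exp (-l) * l * ((x ^ 2) ^ n / (Nat.factorial n)) :=
      mul_le_mul_of_nonneg_right f1 htnn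
    have f3 : Real.exp (-l) * l * ((x ^ 2) ^ n / (Nat.factorial n))
        ≤ Real.exp (-l) * l * (Real.exp l - WeylAux.P l (n - 1)) :=
      mul_le_mul_of_nonneg_left hterm (by positivity)
    have f4 : 0 ≤ l * (Real.exp (-l) * (Real.exp l - WeylAux.P l (n - 1))) :=
      mul_nonneg hl0.le hA1
    linarith [hfinal, f1, f2, f3, f4]
  -- (1,0)
  · simp only [Matrix.sub_apply, Matrix.of_apply, Matrix.cons_val_zero, Matrix.cons_val_one,
      Matrix.head_cons, Fin.isValue, Fin.mk_zero, Fin.mk_one]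
    rw [Matrix.one_apply_ne (by decide)]
    have hswap : ∑ i ∈ Finset.Icc 1 n, cW N i x * bW N i x
        = ∑ i ∈ Finset.Icc 1 n, bW N i x * cW N i x :=
      Finset.sum_congr rfl (fun i _ => mul_comm _ _)
    rw [hswap, WeylAux.sum_bc hN0 hx0.ne' n]
    have hterm : (x ^ 2) ^ n / (Nat.factorial n) ≤ Real.exp l - WeylAux.P l (n - 1) := by
      have hs := WeylAux.P_succ l n
      have hle := WeylAux.P_le_exp hl0.le (n + 1)
      have hm := hPm (n - 1) n (by omega)
      rw [← hldef]
      linarith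
    have htnn : (0:ℝ) ≤ (x ^ 2) ^ n / (Nat.factorial n) := by positivity
    have habs : |Real.exp (-(x ^ 2)) * x * (1 - (x ^ 2) ^ n / (Nat.factorial n)) - 0|
        ≤ Real.exp (-l) * x * (1 + (x ^ 2) ^ n / (Nat.factorial n)) := by
      rw [sub_zero, ← hldef, abs_mul, abs_of_nonneg (by positivity : (0:ℝ) ≤ Real.exp (-l) * x)]
      have : |1 - (x ^ 2) ^ n / (Nat.factorial n)| ≤ 1 + (x ^ 2) ^ n / (Nat.factorial n) := by
        rw [abs_le]; constructor <;> [linarith; linarith]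
      exact mul_le_mul_of_nonneg_left this (by positivity)
    refine habs.trans ?_
    have hx_le : x ≤ l := by
      have h := mul_le_mul_of_nonneg_left (show (1:ℝ) ≤ x by linarith) hx0.le
      rw [hldef, sq]
      rw [mul_one] at h
      linarith
    have f1 : Real.exp (-l) * x ≤ Real.exp (-l) * l :=
      mul_le_mul_of_nonneg_left hx_le hE0.le
    have f2 : Real.exp (-l) * x * ((x ^ 2) ^ n / (Nat.factorial n))
        ≤ Real.exp (-l) * l * ((x ^ 2) ^ n / (Nat.factorial n)) :=
      mul_le_mul_of_nonneg_right f1 htnn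
    have f3 : Real.exp (-l) * l * ((x ^ 2) ^ n / (Nat.factorial n))
        ≤ Real.exp (-l) * l * (Real.exp l - WeylAux.P l (n - 1)) :=
      mul_le_mul_of_nonneg_left hterm (by positivity)
    have f4 : 0 ≤ l * (Real.exp (-l) * (Real.exp l - WeylAux.P l (n - 1))) :=
      mul_nonneg hl0.le hA1
    linarith [hfinal, f1, f2, f3, f4]
  -- (1,1)
  · simp only [Matrix.sub_apply, Matrix.of_apply, Matrix.cons_val_zero, Matrix.cons_val_one,
      Matrix.head_cons, Matrix.one_apply_eq, Fin.isValue, Fin.mk_zero, Fin.mk_one]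
    rw [WeylAux.sum_cc hN0 hx0.ne' n]
    have hfl : Real.exp (-(x ^ 2)) * (1 / x ^ 2) *
          ((x ^ 2) ^ 2 * WeylAux.P (x ^ 2) (n - 1)
            + (1 - 2 * x ^ 2) * (x ^ 2 * WeylAux.P (x ^ 2) n)
            + (x ^ 2) ^ 2 * (WeylAux.P (x ^ 2) (n + 1) - 1))
        = Real.exp (-l) * (l * WeylAux.P l (n - 1) + (1 - 2 * l) * WeylAux.P l n
            + l * (WeylAux.P l (n + 1) - 1)) := by
      rw [← hldef]
      field_simp
    rw [hfl]
    have hval : Real.exp (-l) * (l * WeylAux.P l (n - 1) + (1 - 2 * l) * WeylAux.P l n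
          + l * (WeylAux.P l (n + 1) - 1)) - 1
        = Real.exp (-l) * (-(l * (Real.exp l - WeylAux.P l (n - 1)))
            - (Real.exp l - WeylAux.P l n) + 2 * l * (Real.exp l - WeylAux.P l n)
            - l * (Real.exp l - WeylAux.P l (n + 1)) - l) := by
      linear_combination h1
    rw [hval]
    have g1 : 0 ≤ l * (Real.exp l - WeylAux.P l (n - 1)) := mul_nonneg hl0.le hT1
    have g2 := mul_le_mul_of_nonneg_left hm2 hl0.le
    have g3 : 0 ≤ l * (Real.exp l - WeylAux.P l (n + 1)) := mul_nonneg hl0.le hT3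
    have g4 := mul_le_mul_of_nonneg_left hm3 hl0.le
    have g5 : 0 ≤ (l - 1) * (Real.exp l - WeylAux.P l (n - 1)) :=
      mul_nonneg (by linarith) hT1
    have g6 : 0 ≤ l * (Real.exp l - WeylAux.P l n) := mul_nonneg hl0.le hT2
    have habs : |Real.exp (-l) * (-(l * (Real.exp l - WeylAux.P l (n - 1)))
          - (Real.exp l - WeylAux.P l n) + 2 * l * (Real.exp l - WeylAux.P l n)
          - l * (Real.exp l - WeylAux.P l (n + 1)) - l)|
        ≤ Real.exp (-l) * (5 * l * (Real.exp l - WeylAux.P l (n - 1)) + l) := by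
      rw [abs_mul, abs_of_nonneg hE0.le]
      apply mul_le_mul_of_nonneg_left _ hE0.le
      rw [abs_le]
      constructor
      · linarith [g1, g2, g3, g4, g5, g6, hm2, hT1, hT2]
      · linarith [g1, g2, g3, g4, g5, g6, hm2, hT1, hT2]
    refine habs.trans ?_
    have hre : Real.exp (-l) * (5 * l * (Real.exp l - WeylAux.P l (n - 1)) + l)
        = 5 * l * (Real.exp (-l) * (Real.exp l - WeylAux.P l (n - 1))) + l * Real.exp (-l) := by
      ring
    rw [hre]
    exact hfinal
end

section
/- Let n be an even positive integer and define v_i = 1 for even i and v_i = √2 for odd i, for 1 ≤ i ≤ n. There exists an absolute constant c > 0 such that for every real D with |D| ≥ 1 and every subset I ⊆ {1,…,n}: ∑_{i ∈ {1,…,n}∖I} ‖D·v_i‖²_{ℝ/ℤ} ≥ c·n/D² − |I|. In particular, for any τ ≥ 1 and any fixed bound k₀ on |I|, every real D with |D| ≥ 1 satisfying ∑_{i∉I} ‖D·v_i‖²_{ℝ/ℤ} ≤ τ for some I with |I| ≤ k₀ must satisfy D² ≥ c·n/(τ + k₀). -/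
open Real

/-- Distance from a real number to the nearest integer. -/
noncomputable def distToInt (w : ℝ) : ℝ := |w - round w|

set_option maxHeartbeats 1000000 in
/-- The key diophantine estimate: for `|D| ≥ 1`,
`‖D‖² + ‖D√2‖² ≥ (1/169)/D²`. -/
lemma key_dist_lower (D : ℝ) (hD : 1 ≤ |D|) :
    1/169 / D ^ 2 ≤ distToInt D ^ 2 + distToInt (D * Real.sqrt 2) ^ 2 := by
  set s : ℝ := Real.sqrt 2 with hsdef
  have hs0 : 0 ≤ s := Real.sqrt_nonneg 2
  have hs : s ^ 2 = 2 := Real.sq_sqrt (by norm_num)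
  have hs15 : s ≤ 3/2 := by nlinarith
  set p : ℤ := round D with hpdef
  set q : ℤ := round (D * s) with hqdef
  have ha : |D - p| ≤ 1/2 := abs_sub_round D
  have hb : |D * s - q| ≤ 1/2 := abs_sub_round (D * s)
  clear_value s p q
  -- p ≠ 0
  have hp0 : p ≠ 0 := by
    intro h
    rw [h] at ha
    simp at ha
    have := abs_sub_abs_le_abs_sub D (0:ℝ)
    simp at this
    linarith
  -- 2p² - q² ≠ 0
  have hne : 2 * p ^ 2 - q ^ 2 ≠ 0 := by
    intro h
    have hq2 : (q : ℝ) ^ 2 = 2 * (p : ℝ) ^ 2 := by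
      have : (2 * p ^ 2 - q ^ 2 : ℤ) = 0 := h
      have := congrArg (fun z : ℤ => (z : ℝ)) this
      push_cast at this
      linarith
    have hpR : (p : ℝ) ≠ 0 := Int.cast_ne_zero.mpr hp0
    have h2 : ((q : ℝ) / p) ^ 2 = 2 := by
      field_simp at hq2 ⊢
      linarith
    have hsq : s = |(q : ℝ) / p| := by
      rw [hsdef, ← h2, Real.sqrt_sq_eq_abs]
    refine irrational_sqrt_two ⟨|(q : ℚ) / p|, ?_⟩
    push_cast
    rw [← hsq]
    exact hsdef
  have h1 : (1 : ℝ) ≤ |2 * (p : ℝ) ^ 2 - (q : ℝ) ^ 2| := by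
    have := Int.one_le_abs hne
    have : (1 : ℝ) ≤ |(2 * p ^ 2 - q ^ 2 : ℤ)| := by exact_mod_cast this
    push_cast at this
    convert this using 2
  have hid : 2 * (p : ℝ) ^ 2 - (q : ℝ) ^ 2 = (s * p - q) * (s * p + q) := by
    linear_combination (-(p : ℝ) ^ 2) * hs
  -- bounds on |p|, |q|
  have hpD : |(p : ℝ)| ≤ 3/2 * |D| := by
    have := abs_sub_abs_le_abs_sub (p : ℝ) D
    rw [abs_sub_comm] at this
    linarith
  have hqD : |(q : ℝ)| ≤ 2 * |D| := by
    have := abs_sub_abs_le_abs_sub (q : ℝ) (D * s)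
    rw [abs_sub_comm] at this
    have hDs : |D * s| ≤ 3/2 * |D| := by
      rw [abs_mul, abs_of_nonneg hs0]
      nlinarith [abs_nonneg D]
    linarith
  have hsum : |s * p + q| ≤ 5 * |D| := by
    have h := abs_add_le (s * (p : ℝ)) (q : ℝ)
    rw [abs_mul, abs_of_nonneg hs0] at h
    nlinarith [abs_nonneg (p:ℝ)]
  have h3 : 1 ≤ |s * p - q| * (5 * |D|) := by
    rw [hid, abs_mul] at h1
    have hnn : 0 ≤ |s * (p:ℝ) - q| := abs_nonneg _
    nlinarith
  -- s*p - q = (D*s - q) - s*(D - p)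
  have hid2 : s * (p : ℝ) - q = (D * s - q) - s * (D - p) := by ring
  have h4 : |s * (p:ℝ) - q| ≤ 3/2 * (|D - p| + |D * s - q|) := by
    rw [hid2]
    have h := abs_sub (D * s - q) (s * (D - p))
    rw [abs_mul, abs_of_nonneg hs0] at h
    have h' : s * |D - (p:ℝ)| ≤ 3/2 * |D - (p:ℝ)| :=
      mul_le_mul_of_nonneg_right hs15 (abs_nonneg _)
    have := abs_nonneg (D * s - (q:ℝ))
    linarith
  have h5 : 1 ≤ (3/2 * (|D - p| + |D * s - q|)) * (5 * |D|) := by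
    have hnn : (0:ℝ) ≤ 5 * |D| := by positivity
    nlinarith [abs_nonneg (s * (p:ℝ) - q)]
  have hD2 : |D| ^ 2 = D ^ 2 := sq_abs D
  have hu : 2/15 ≤ (|D - (p:ℝ)| + |D * s - q|) * |D| := by nlinarith [abs_nonneg D]
  have huu : (2/15 : ℝ)^2 ≤ ((|D - (p:ℝ)| + |D * s - q|) * |D|)^2 :=
    pow_le_pow_left₀ (by norm_num) hu 2
  rw [mul_pow, sq_abs] at huu
  have hsq2 : (|D - (p:ℝ)| + |D * s - q|)^2 ≤ 2 * (|D - (p:ℝ)|^2 + |D * s - q|^2) := by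
    nlinarith [sq_nonneg (|D - (p:ℝ)| - |D * s - q|)]
  have hDD : (0:ℝ) ≤ D ^ 2 := sq_nonneg D
  have hD0 : D ≠ 0 := by
    rintro rfl
    simp at hD
    linarith
  have hDpos : (0:ℝ) < D ^ 2 := by positivity
  have hfin : 1/169 / D ^ 2 ≤ |D - p| ^ 2 + |D * s - q| ^ 2 := by
    rw [div_le_iff₀ hDpos]
    linarith [huu, mul_le_mul_of_nonneg_right hsq2 hDD]
  rw [distToInt, distToInt, ← hpdef, ← hqdef]
  exact hfin

lemma sum_Icc_even_odd (A B : ℝ) (m : ℕ) :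
    ∑ i ∈ Finset.Icc 1 (2 * m), (if Even i then A else B) = m * (A + B) := by
  induction m with
  | zero => simp
  | succ m ih =>
    have h1 : (2 * (m + 1)) = (2 * m + 1) + 1 := by ring
    rw [h1, Finset.sum_Icc_succ_top (by omega), Finset.sum_Icc_succ_top (by omega), ih]
    have he : Even (2 * m + 1 + 1) := ⟨m + 1, by ring⟩
    have ho : ¬ Even (2 * m + 1) := by simp [parity_simps]
    rw [if_pos he, if_neg ho]
    push_cast
    ring

/-- Diophantine lower bound for the alternating sequence `1, √2, 1, √2, …`. -/
theorem lcd_one_sqrt_two :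
    ∃ c > (0 : ℝ), ∀ n : ℕ, Even n → 0 < n →
      (∀ D : ℝ, 1 ≤ |D| → ∀ I ⊆ Finset.Icc 1 n,
          c * n / D ^ 2 - I.card ≤
            ∑ i ∈ Finset.Icc 1 n \ I,
              distToInt (D * (if Even i then 1 else Real.sqrt 2)) ^ 2) ∧
      (∀ τ : ℝ, 1 ≤ τ → ∀ k₀ : ℕ, ∀ D : ℝ, 1 ≤ |D| →
          (∃ I ⊆ Finset.Icc 1 n, I.card ≤ k₀ ∧
              ∑ i ∈ Finset.Icc 1 n \ I,
                distToInt (D * (if Even i then 1 else Real.sqrt 2)) ^ 2 ≤ τ) →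
          c * n / (τ + k₀) ≤ D ^ 2) := by
  refine ⟨1/338, by norm_num, ?_⟩
  intro n hnev hn
  obtain ⟨m, hm⟩ := hnev
  have hm2 : n = 2 * m := by omega
  have hpart1 : ∀ D : ℝ, 1 ≤ |D| → ∀ I ⊆ Finset.Icc 1 n,
      (1:ℝ)/338 * n / D ^ 2 - I.card ≤
        ∑ i ∈ Finset.Icc 1 n \ I,
          distToInt (D * (if Even i then 1 else Real.sqrt 2)) ^ 2 := by
    intro D hD I hI
    set f : ℕ → ℝ := fun i => distToInt (D * (if Even i then 1 else Real.sqrt 2)) ^ 2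
      with hf
    set A : ℝ := distToInt D ^ 2 with hA
    set B : ℝ := distToInt (D * Real.sqrt 2) ^ 2 with hB
    have hfi : ∀ i, f i = if Even i then A else B := by
      intro i
      by_cases h : Even i <;> simp [hf, hA, hB, h]
    have hsdiff : ∑ i ∈ Finset.Icc 1 n \ I, f i
        = ∑ i ∈ Finset.Icc 1 n, f i - ∑ i ∈ I, f i :=
      Finset.sum_sdiff_eq_sub hI
    have htot : ∑ i ∈ Finset.Icc 1 n, f i = m * (A + B) := by
      rw [hm2, ← sum_Icc_even_odd A B m]
      exact Finset.sum_congr rfl fun i _ => hfi i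
    have hIle : ∑ i ∈ I, f i ≤ (I.card : ℝ) := by
      calc ∑ i ∈ I, f i ≤ I.card • (1:ℝ) := by
            refine Finset.sum_le_card_nsmul I f 1 fun i _ => ?_
            rw [hfi i]
            split_ifs
            · have h1 : distToInt D ≤ 1/2 := abs_sub_round D
              have h2 : 0 ≤ distToInt D := abs_nonneg _
              rw [hA]; nlinarith
            · have h1 : distToInt (D * Real.sqrt 2) ≤ 1/2 := abs_sub_round _
              have h2 : 0 ≤ distToInt (D * Real.sqrt 2) := abs_nonneg _
              rw [hB]; nlinarith
        _ = (I.card : ℝ) := by simp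
    have hkey : 1/169 / D ^ 2 ≤ A + B := key_dist_lower D hD
    have hmkey : (m : ℝ) * (1/169 / D ^ 2) ≤ (m : ℝ) * (A + B) :=
      mul_le_mul_of_nonneg_left hkey (by positivity)
    have hc : (1:ℝ)/338 * n / D ^ 2 = (m : ℝ) * (1/169 / D ^ 2) := by
      rw [hm2]
      push_cast
      ring
    rw [hsdiff, htot, hc]
    linarith
  refine ⟨hpart1, ?_⟩
  rintro τ hτ k₀ D hD ⟨I, hI, hIcard, hsum⟩
  have h1 := hpart1 D hD I hI
  have hD0 : D ≠ 0 := by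
    rintro rfl
    simp at hD
    linarith
  have hDpos : (0:ℝ) < D ^ 2 := by positivity
  have hT : (0:ℝ) < τ + k₀ := by positivity
  have h2 : (1:ℝ)/338 * n / D ^ 2 ≤ τ + k₀ := by
    have : (I.card : ℝ) ≤ k₀ := by exact_mod_cast hIcard
    linarith
  rw [div_le_iff₀ hDpos] at h2
  rw [div_le_iff₀ hT]
  nlinarith [h2, hDpos, hT, sq_nonneg D]
end

section
/- Fix 0 < ε < 1/2, 0 < σ* < 1/2, 0 < a₁ < a₂, and nonnegative integers α₁, α₂, α₃, α₄ with α₁ + α₂ > 0 and α₃ + α₄ > 0. There exist c > 0, K and n₀ such that for all integers n ≥ n₀, all reals N with n^{σ*} ≤ N, and all x, y with a₁·N ≤ x, y ≤ a₂·N and |x − y| ≥ N^{ε}: | ∑_{i=1}^n b_i(x)^{α₁}·c_i(x)^{α₂}·b_i(y)^{α₃}·c_i(y)^{α₄} | ≤ K·exp(−c·N^{ε/2}). -/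
set_option maxHeartbeats 1000000

open Real

lemma pow_div_fact_le_exp (u : ℝ) (hu : 0 ≤ u) (i : ℕ) : u ^ i / i.factorial ≤ Real.exp u := by
  calc u ^ i / i.factorial ≤ ∑ j ∈ Finset.range (i+1), u ^ j / j.factorial := by
        refine Finset.single_le_sum (f := fun j => u ^ j / j.factorial) ?_
          (Finset.self_mem_range_succ i)
        intro j _
        positivity
    _ ≤ Real.exp u := Real.sum_le_exp_of_nonneg hu _

lemma key_poisson (l : ℝ) (hl : 0 < l) (i : ℕ) (hi : 1 ≤ i) :
    l ^ i * Real.exp (-l) / i.factorial ≤ Real.exp (-(Real.sqrt i - Real.sqrt l) ^ 2) := by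
  have hi0 : (0:ℝ) < i := by exact_mod_cast hi
  have hfac : (0:ℝ) < i.factorial := by exact_mod_cast i.factorial_pos
  have hlog : Real.log (l / i) ≤ 2 * (Real.sqrt (l / i) - 1) := by
    have hu : (0:ℝ) < l / i := div_pos hl hi0
    have h1 : Real.log (Real.sqrt (l / i)) ≤ Real.sqrt (l / i) - 1 :=
      Real.log_le_sub_one_of_pos (Real.sqrt_pos.mpr hu)
    have h2 : Real.log (l / i) = 2 * Real.log (Real.sqrt (l / i)) := by
      rw [Real.log_sqrt hu.le]; ring
    linarith
  have hiu : (i : ℝ) * Real.sqrt (l / i) = Real.sqrt (i * l) := by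
    rw [show (i:ℝ) * l = (i:ℝ)^2 * (l / i) by field_simp, Real.sqrt_mul (by positivity),
      Real.sqrt_sq hi0.le]
  have h3 : (l / i) ^ i ≤ Real.exp (2 * Real.sqrt (i * l) - 2 * i) := by
    have : (l / i) ^ i = Real.exp ((i : ℝ) * Real.log (l / i)) := by
      rw [Real.exp_nat_mul, Real.exp_log (div_pos hl hi0)]
    rw [this]
    apply Real.exp_le_exp.mpr
    have := mul_le_mul_of_nonneg_left hlog hi0.le
    nlinarith [this, hiu]
  have h4 : ((i:ℝ)) ^ i / i.factorial ≤ Real.exp i := pow_div_fact_le_exp i (by positivity) i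
  have hsplit : l ^ i / i.factorial = (l / i) ^ i * ((i:ℝ) ^ i / i.factorial) := by
    rw [div_pow]; field_simp
  have h5 : l ^ i / i.factorial ≤ Real.exp (2 * Real.sqrt (i * l) - 2 * i) * Real.exp i := by
    rw [hsplit]
    exact mul_le_mul h3 h4 (by positivity) (Real.exp_nonneg _)
  have h6 : l ^ i * Real.exp (-l) / i.factorial
      ≤ Real.exp (2 * Real.sqrt (i * l) - 2 * i) * Real.exp i * Real.exp (-l) := by
    have := mul_le_mul_of_nonneg_right h5 (Real.exp_nonneg (-l))
    calc l ^ i * Real.exp (-l) / i.factorial = l ^ i / i.factorial * Real.exp (-l) := by ring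
      _ ≤ _ := this
  refine h6.trans_eq ?_
  rw [← Real.exp_add, ← Real.exp_add]
  congr 1
  have hs : Real.sqrt (i * l) = Real.sqrt i * Real.sqrt l := Real.sqrt_mul (by positivity) l
  have h7 : Real.sqrt i ^ 2 = (i:ℝ) := Real.sq_sqrt (by positivity)
  have h8 : Real.sqrt l ^ 2 = l := Real.sq_sqrt hl.le
  nlinarith [hs, h7, h8]

lemma bW_le (N x : ℝ) (hN : 0 ≤ N) (hx : 0 < x) (i : ℕ) (hi : 1 ≤ i) :
    |bW N i x| ≤ Real.sqrt N * Real.exp (-(Real.sqrt i - x) ^ 2 / 2) := by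
  have hfac : (0:ℝ) < i.factorial := by exact_mod_cast i.factorial_pos
  have hsq : (bW N i x) ^ 2 = N * ((x ^ 2) ^ i * Real.exp (-x ^ 2) / i.factorial) := by
    unfold bW
    rw [div_pow, mul_pow, mul_pow, Real.sq_sqrt hN,
      Real.sq_sqrt (by positivity : (0:ℝ) ≤ i.factorial), ← Real.exp_nat_mul, pow_right_comm]
    rw [show ((2:ℕ):ℝ) * (-x^2/2) = -x^2 by push_cast; ring]
    ring
  have hkey : (bW N i x) ^ 2 ≤ N * Real.exp (-(Real.sqrt i - x) ^ 2) := by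
    rw [hsq]
    apply mul_le_mul_of_nonneg_left _ hN
    have := key_poisson (x ^ 2) (by positivity) i hi
    rwa [Real.sqrt_sq hx.le] at this
  calc |bW N i x| = Real.sqrt ((bW N i x) ^ 2) := (Real.sqrt_sq_eq_abs _).symm
    _ ≤ Real.sqrt (N * Real.exp (-(Real.sqrt i - x) ^ 2)) := Real.sqrt_le_sqrt hkey
    _ = Real.sqrt N * Real.exp (-(Real.sqrt i - x) ^ 2 / 2) := by
        rw [Real.sqrt_mul hN, Real.exp_half]

lemma cW_le (N x : ℝ) (hN : 0 ≤ N) (hx : 0 < x) (i : ℕ) (hi : 1 ≤ i) :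
    |cW N i x| ≤ (((i : ℝ) + x ^ 2) / x) *
      (Real.sqrt N * Real.exp (-(Real.sqrt i - x) ^ 2 / 2)) := by
  have hcW : cW N i x = (((i : ℝ) - x ^ 2) / x) * bW N i x := by unfold cW bW; ring
  rw [hcW, abs_mul]
  apply mul_le_mul _ (bW_le N x hN hx i hi) (abs_nonneg _) (by positivity)
  rw [abs_div, abs_of_pos hx]
  gcongr
  have : (0:ℝ) ≤ i := by positivity
  cases abs_cases ((i:ℝ) - x ^ 2) with
  | inl h => nlinarith [h.1]
  | inr h => nlinarith [h.1]

/-- Exponential smallness of mixed sums `∑_i b_i(x)^{α₁} c_i(x)^{α₂} b_i(y)^{α₃} c_i(y)^{α₄}`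
for well separated `x, y`. -/
theorem weyl_mixed_sum_small
    (ε σs a₁ a₂ : ℝ) (hε0 : 0 < ε) (hε : ε < 1 / 2) (hσ0 : 0 < σs) (hσ : σs < 1 / 2)
    (ha₁ : 0 < a₁) (ha : a₁ < a₂)
    (α₁ α₂ α₃ α₄ : ℕ) (h12 : 0 < α₁ + α₂) (h34 : 0 < α₃ + α₄) :
    ∃ c > (0 : ℝ), ∃ K : ℝ, ∃ n₀ : ℕ, ∀ n ≥ n₀, ∀ N : ℝ, (n : ℝ) ^ σs ≤ N →
      ∀ x y : ℝ, a₁ * N ≤ x → x ≤ a₂ * N → a₁ * N ≤ y → y ≤ a₂ * N →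
        N ^ ε ≤ |x - y| →
        |∑ i ∈ Finset.Icc 1 n,
            bW N i x ^ α₁ * cW N i x ^ α₂ * bW N i y ^ α₃ * cW N i y ^ α₄|
          ≤ K * Real.exp (-c * N ^ (ε / 2)) := by
  set A := α₁ + α₂ + α₃ + α₄ with hAdef
  set q := ⌈1/σs⌉₊ with hqdef
  set C := (1 + a₂ ^ 2) / a₁ + 1 with hCdef
  have hC1 : (1:ℝ) ≤ C := by
    rw [hCdef]
    have : (0:ℝ) ≤ (1 + a₂ ^ 2) / a₁ := by positivity
    linarith
  have hC0 : (0:ℝ) < C := by linarith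
  set R := q + (q + 3) * A with hRdef
  set D := C ^ A with hDdef
  have hD0' : (0:ℝ) < D := by rw [hDdef]; positivity
  clear_value A q C R D
  -- eventual smallness of the polynomial-times-exponential prefactor
  have htend : Filter.Tendsto (fun N : ℝ => D * (N ^ R * Real.exp (-(1/8) * N ^ (2*ε))))
      Filter.atTop (nhds 0) := by
    have h1 := tendsto_rpow_mul_exp_neg_mul_atTop_nhds_zero ((R:ℝ)/(2*ε)) (1/8) (by norm_num)
    have h2 : Filter.Tendsto (fun N : ℝ => N ^ (2*ε)) Filter.atTop Filter.atTop :=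
      tendsto_rpow_atTop (by linarith)
    have h4 : Filter.Tendsto (fun N : ℝ => (N:ℝ) ^ R * Real.exp (-(1/8) * N ^ (2*ε)))
        Filter.atTop (nhds 0) := by
      apply (h1.comp h2).congr'
      filter_upwards [Filter.eventually_gt_atTop (0:ℝ)] with N hN
      simp only [Function.comp_apply]
      congr 1
      rw [← Real.rpow_mul hN.le, ← Real.rpow_natCast N R]
      congr 1
      field_simp
    simpa using h4.const_mul D
  have hev : ∀ᶠ N in Filter.atTop, D * (N ^ R * Real.exp (-(1/8) * N ^ (2*ε))) ≤ 1 :=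
    (htend.eventually_lt_const (by norm_num : (0:ℝ) < 1)).mono fun _ h => h.le
  obtain ⟨T, hT⟩ := Filter.eventually_atTop.mp hev
  have hnat : Filter.Tendsto (fun n : ℕ => (n:ℝ) ^ σs) Filter.atTop Filter.atTop :=
    (tendsto_rpow_atTop hσ0).comp tendsto_natCast_atTop_atTop
  obtain ⟨n₀, hn₀⟩ := Filter.eventually_atTop.mp (hnat.eventually_ge_atTop (max T 1))
  refine ⟨1/8, by norm_num, 1, n₀, ?_⟩
  intro n hn N hNn x y hx1 hx2 hy1 hy2 hxy
  have hTN : max T 1 ≤ N := le_trans (hn₀ n hn) hNn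
  have hN1 : (1:ℝ) ≤ N := le_trans (le_max_right _ _) hTN
  have hN0 : (0:ℝ) < N := by linarith
  -- n ≤ N ^ q
  have hnN : (n : ℝ) ≤ N ^ q := by
    have h1 : ((n:ℝ) ^ σs) ^ (1/σs) = (n:ℝ) := by
      rw [← Real.rpow_mul (Nat.cast_nonneg n), mul_one_div, div_self (ne_of_gt hσ0),
        Real.rpow_one]
    calc (n:ℝ) = ((n:ℝ) ^ σs) ^ (1/σs) := h1.symm
      _ ≤ N ^ (1/σs) :=
          Real.rpow_le_rpow (Real.rpow_nonneg (Nat.cast_nonneg n) _) hNn (by positivity)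
      _ ≤ N ^ (q:ℝ) := by
          rw [hqdef]
          exact Real.rpow_le_rpow_of_exponent_le hN1 (Nat.le_ceil _)
      _ = N ^ q := Real.rpow_natCast N q
  have hsNle : Real.sqrt N ≤ N := by
    calc Real.sqrt N ≤ Real.sqrt (N ^ 2) := Real.sqrt_le_sqrt (by nlinarith)
      _ = N := Real.sqrt_sq hN0.le
  set M := C * N ^ (q + 3) with hMdef
  have hNq3 : (1:ℝ) ≤ N ^ (q + 3) := one_le_pow₀ hN1
  have hM1 : (1:ℝ) ≤ M := by rw [hMdef]; nlinarith
  clear_value M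
  have hM0 : (0:ℝ) < M := by linarith
  have hsqrtN : Real.sqrt N ≤ M := by
    have h1 : Real.sqrt N ≤ N := hsNle
    have h2 : N ≤ N ^ (q + 3) := le_self_pow₀ hN1 (by omega)
    have h3 : N ^ (q + 3) ≤ C * N ^ (q + 3) :=
      le_mul_of_one_le_left (by positivity) hC1
    linarith
  -- uniform pointwise bounds
  have hbound : ∀ z : ℝ, a₁ * N ≤ z → z ≤ a₂ * N → ∀ i ∈ Finset.Icc 1 n,
      |bW N i z| ≤ M * Real.exp (-(Real.sqrt i - z) ^ 2 / 2) ∧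
      |cW N i z| ≤ M * Real.exp (-(Real.sqrt i - z) ^ 2 / 2) := by
    intro z hz1 hz2 i hi
    rw [Finset.mem_Icc] at hi
    have hz0 : 0 < z := lt_of_lt_of_le (by positivity) hz1
    have hb := bW_le N z hN0.le hz0 i hi.1
    have hc := cW_le N z hN0.le hz0 i hi.1
    have hE0 : (0:ℝ) ≤ Real.exp (-(Real.sqrt i - z) ^ 2 / 2) := Real.exp_nonneg _
    refine ⟨hb.trans (mul_le_mul_of_nonneg_right hsqrtN hE0), hc.trans ?_⟩
    have hiN : (i:ℝ) ≤ N ^ q := le_trans (by exact_mod_cast hi.2) hnN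
    have hfrac : ((i:ℝ) + z ^ 2) / z * Real.sqrt N ≤ M := by
      rw [hMdef]
      have hNq : N ^ q ≤ N ^ (q + 2) := pow_le_pow_right₀ hN1 (by omega)
      have hN2 : N ^ 2 ≤ N ^ (q + 2) := pow_le_pow_right₀ hN1 (by omega)
      have hz2' : z ^ 2 ≤ a₂ ^ 2 * N ^ 2 := by nlinarith [hz2, hz0.le, hN0.le]
      have hz2'' : a₂ ^ 2 * N ^ 2 ≤ a₂ ^ 2 * N ^ (q + 2) :=
        mul_le_mul_of_nonneg_left hN2 (sq_nonneg a₂)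
      have h1 : (i:ℝ) + z ^ 2 ≤ (1 + a₂ ^ 2) * N ^ (q + 2) := by
        have := hiN.trans hNq
        nlinarith [this, hz2', hz2'']
      have h2 : ((i:ℝ) + z ^ 2) / z ≤ (1 + a₂ ^ 2) * N ^ (q + 2) / (a₁ * N) :=
        div_le_div₀ (by positivity) h1 (by positivity) hz1
      have h3 : (1 + a₂ ^ 2) * N ^ (q + 2) / (a₁ * N) = (1 + a₂ ^ 2) / a₁ * N ^ (q + 1) := by
        rw [show q + 2 = (q + 1) + 1 by omega, pow_succ]
        field_simp
        ring
      have h4 : ((i:ℝ) + z ^ 2) / z ≤ (1 + a₂ ^ 2) / a₁ * N ^ (q + 1) := h2.trans_eq h3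
      have h5 : Real.sqrt N ≤ N := hsNle
      have h6 : N ^ (q + 1) * N = N ^ (q + 2) := by rw [← pow_succ]
      have h7 : N ^ (q + 2) ≤ N ^ (q + 3) := pow_le_pow_right₀ hN1 (by omega)
      have h8 : (0:ℝ) ≤ (1 + a₂ ^ 2) / a₁ := by positivity
      have h9 : (0:ℝ) < N ^ (q + 1) := by positivity
      have h10 : (0:ℝ) ≤ ((i:ℝ) + z ^ 2) / z := by positivity
      calc ((i:ℝ) + z ^ 2) / z * Real.sqrt N ≤ (1 + a₂ ^ 2) / a₁ * N ^ (q + 1) * N := by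
            apply mul_le_mul h4 h5 (Real.sqrt_nonneg N) (by positivity)
        _ = (1 + a₂ ^ 2) / a₁ * N ^ (q + 2) := by rw [mul_assoc, h6]
        _ ≤ C * N ^ (q + 3) := by
            apply mul_le_mul (by linarith) h7 (by positivity) (by linarith)
    calc ((i:ℝ) + z ^ 2) / z * (Real.sqrt N * Real.exp (-(Real.sqrt i - z) ^ 2 / 2))
        = ((i:ℝ) + z ^ 2) / z * Real.sqrt N * Real.exp (-(Real.sqrt i - z) ^ 2 / 2) := by ring
      _ ≤ M * Real.exp (-(Real.sqrt i - z) ^ 2 / 2) :=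
          mul_le_mul_of_nonneg_right hfrac hE0
  -- separation: (x - y)^2 ≥ N ^ (2 ε)
  have hsep : N ^ (2*ε) ≤ (x - y) ^ 2 := by
    have hNe0 : (0:ℝ) ≤ N ^ ε := Real.rpow_nonneg hN0.le ε
    have h1 : N ^ (2*ε) = (N ^ ε) ^ 2 := by
      rw [← Real.rpow_natCast (N ^ ε) 2, ← Real.rpow_mul hN0.le]
      norm_num [mul_comm]
    have h2 : (N ^ ε) ^ 2 ≤ |x - y| ^ 2 := by
      apply pow_le_pow_left₀ hNe0 hxy
    rw [h1]
    calc (N ^ ε) ^ 2 ≤ |x - y| ^ 2 := h2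
      _ = (x - y) ^ 2 := sq_abs _
  -- per-term bound
  have hterm : ∀ i ∈ Finset.Icc 1 n,
      |bW N i x ^ α₁ * cW N i x ^ α₂ * bW N i y ^ α₃ * cW N i y ^ α₄|
        ≤ M ^ A * Real.exp (-N ^ (2*ε) / 4) := by
    intro i hi
    obtain ⟨hbx, hcx⟩ := hbound x hx1 hx2 i hi
    obtain ⟨hby, hcy⟩ := hbound y hy1 hy2 i hi
    set Ex := Real.exp (-(Real.sqrt i - x) ^ 2 / 2) with hExdef
    set Ey := Real.exp (-(Real.sqrt i - y) ^ 2 / 2) with hEydef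
    have hEx0 : 0 ≤ Ex := Real.exp_nonneg _
    have hEy0 : 0 ≤ Ey := Real.exp_nonneg _
    have hEx1 : Ex ≤ 1 := by
      rw [hExdef, ← Real.exp_zero]
      exact Real.exp_le_exp.mpr (by nlinarith [sq_nonneg (Real.sqrt i - x)])
    have hEy1 : Ey ≤ 1 := by
      rw [hEydef, ← Real.exp_zero]
      exact Real.exp_le_exp.mpr (by nlinarith [sq_nonneg (Real.sqrt i - y)])
    have habs : |bW N i x ^ α₁ * cW N i x ^ α₂ * bW N i y ^ α₃ * cW N i y ^ α₄|
        = |bW N i x| ^ α₁ * |cW N i x| ^ α₂ * |bW N i y| ^ α₃ * |cW N i y| ^ α₄ := by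
      rw [abs_mul, abs_mul, abs_mul, abs_pow, abs_pow, abs_pow, abs_pow]
    rw [habs]
    have h1 : |bW N i x| ^ α₁ * |cW N i x| ^ α₂ * |bW N i y| ^ α₃ * |cW N i y| ^ α₄
        ≤ (M * Ex) ^ α₁ * (M * Ex) ^ α₂ * (M * Ey) ^ α₃ * (M * Ey) ^ α₄ := by
      gcongr <;> first
        | exact abs_nonneg _
        | assumption
    have h2 : (M * Ex) ^ α₁ * (M * Ex) ^ α₂ * (M * Ey) ^ α₃ * (M * Ey) ^ α₄
        = M ^ A * (Ex ^ (α₁ + α₂) * Ey ^ (α₃ + α₄)) := by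
      rw [hAdef]
      rw [mul_pow, mul_pow, mul_pow, mul_pow, pow_add, pow_add, pow_add, pow_add, pow_add]
      ring
    have h3 : Ex ^ (α₁ + α₂) ≤ Ex := by
      simpa using pow_le_pow_of_le_one hEx0 hEx1 h12
    have h4 : Ey ^ (α₃ + α₄) ≤ Ey := by
      simpa using pow_le_pow_of_le_one hEy0 hEy1 h34
    have h5 : Ex * Ey ≤ Real.exp (-N ^ (2*ε) / 4) := by
      rw [hExdef, hEydef, ← Real.exp_add]
      apply Real.exp_le_exp.mpr
      nlinarith [sq_nonneg ((Real.sqrt i - x) + (Real.sqrt i - y)), hsep]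
    calc |bW N i x| ^ α₁ * |cW N i x| ^ α₂ * |bW N i y| ^ α₃ * |cW N i y| ^ α₄
        ≤ M ^ A * (Ex ^ (α₁ + α₂) * Ey ^ (α₃ + α₄)) := h1.trans_eq h2
      _ ≤ M ^ A * (Ex * Ey) := by
          apply mul_le_mul_of_nonneg_left _ (pow_nonneg hM0.le A)
          exact mul_le_mul h3 h4 (pow_nonneg hEy0 _) hEx0
      _ ≤ M ^ A * Real.exp (-N ^ (2*ε) / 4) :=
          mul_le_mul_of_nonneg_left h5 (pow_nonneg hM0.le A)
  -- sum up
  have hsum : |∑ i ∈ Finset.Icc 1 n,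
      bW N i x ^ α₁ * cW N i x ^ α₂ * bW N i y ^ α₃ * cW N i y ^ α₄|
      ≤ (n : ℝ) * (M ^ A * Real.exp (-N ^ (2*ε) / 4)) := by
    calc |∑ i ∈ Finset.Icc 1 n,
        bW N i x ^ α₁ * cW N i x ^ α₂ * bW N i y ^ α₃ * cW N i y ^ α₄|
        ≤ ∑ i ∈ Finset.Icc 1 n,
            |bW N i x ^ α₁ * cW N i x ^ α₂ * bW N i y ^ α₃ * cW N i y ^ α₄| :=
          Finset.abs_sum_le_sum_abs _ _
      _ ≤ ∑ _i ∈ Finset.Icc 1 n, M ^ A * Real.exp (-N ^ (2*ε) / 4) :=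
          Finset.sum_le_sum hterm
      _ = ((Finset.Icc 1 n).card : ℝ) * (M ^ A * Real.exp (-N ^ (2*ε) / 4)) := by
          rw [Finset.sum_const, nsmul_eq_mul]
      _ ≤ (n : ℝ) * (M ^ A * Real.exp (-N ^ (2*ε) / 4)) := by
          apply mul_le_mul_of_nonneg_right _
            (mul_nonneg (pow_nonneg hM0.le A) (Real.exp_nonneg _))
          rw [Nat.card_Icc]
          simp
  -- final estimate
  have hfin1 : (n : ℝ) * (M ^ A * Real.exp (-N ^ (2*ε) / 4))
      = D * (N ^ R * Real.exp (-(1/8) * N ^ (2*ε))) * Real.exp (-(1/8) * N ^ (2*ε))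
        * ((n:ℝ) / N ^ q) := by
    have hMA : M ^ A = C ^ A * N ^ ((q + 3) * A) := by
      rw [hMdef, mul_pow, ← pow_mul]
    have hEE : Real.exp (-N ^ (2*ε) / 4)
        = Real.exp (-(1/8) * N ^ (2*ε)) * Real.exp (-(1/8) * N ^ (2*ε)) := by
      rw [← Real.exp_add]; congr 1; ring
    rw [hMA, hEE, hDdef, hRdef, pow_add]
    field_simp
  have hnq : (n:ℝ) / N ^ q ≤ 1 := by
    rw [div_le_one (by positivity)]
    exact hnN
  have hfin2 : (n : ℝ) * (M ^ A * Real.exp (-N ^ (2*ε) / 4))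
      ≤ 1 * Real.exp (-(1/8) * N ^ (2*ε)) := by
    rw [hfin1]
    have hTle : D * (N ^ R * Real.exp (-(1/8) * N ^ (2*ε))) ≤ 1 :=
      hT N (le_trans (le_max_left _ _) hTN)
    calc D * (N ^ R * Real.exp (-(1/8) * N ^ (2*ε))) * Real.exp (-(1/8) * N ^ (2*ε))
        * ((n:ℝ) / N ^ q)
        ≤ 1 * Real.exp (-(1/8) * N ^ (2*ε)) * 1 := by
          apply mul_le_mul _ hnq (by positivity) (by positivity)
          exact mul_le_mul_of_nonneg_right hTle (Real.exp_nonneg _)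
      _ = 1 * Real.exp (-(1/8) * N ^ (2*ε)) := by ring
  have hfin3 : Real.exp (-(1/8) * N ^ (2*ε)) ≤ Real.exp (-(1/8) * N ^ (ε/2)) := by
    apply Real.exp_le_exp.mpr
    have : N ^ (ε/2) ≤ N ^ (2*ε) := Real.rpow_le_rpow_of_exponent_le hN1 (by linarith)
    linarith
  calc |∑ i ∈ Finset.Icc 1 n,
      bW N i x ^ α₁ * cW N i x ^ α₂ * bW N i y ^ α₃ * cW N i y ^ α₄|
      ≤ (n : ℝ) * (M ^ A * Real.exp (-N ^ (2*ε) / 4)) := hsum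
    _ ≤ 1 * Real.exp (-(1/8) * N ^ (2*ε)) := hfin2
    _ ≤ 1 * Real.exp (-(1/8) * N ^ (ε/2)) := by
        rw [one_mul, one_mul]; exact hfin3
end
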